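/- Fix natural numbers N, n, r with r ≤ n. Then 2^(N-i+1) divides C(n, i) for all i with n-r < i ≤ N if and only if 2^(N-i+1) divides C(r+i-1, i) for all i with n-r < i ≤ N. -/

import Mathlib

theorem stmt_2 (N n r : ℕ) (hrn : r ≤ n) :
    (∀ i, n - r < i → i ≤ N → 2 ^ (N - i + 1) ∣ n.choose i) ↔
      (∀ i, n - r < i → i ≤ N → 2 ^ (N - i + 1) ∣ (r + i - 1).choose i) := by
  constructor
  · intro H i hi hiN
    have hd : r + i - 1 = (i - (n - r) - 1) + n := by omega
    rw [hd, Nat.add_choose_eq]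
    apply Finset.dvd_sum
    rintro ⟨a, b⟩ hab
    rw [Finset.HasAntidiagonal.mem_antidiagonal] at hab
    by_cases hb : n - r < b
    · exact Dvd.dvd.mul_left
        ((pow_dvd_pow 2 (by omega)).trans (H b hb (by omega))) _
    · rw [Nat.choose_eq_zero_of_lt (by omega), zero_mul]
      exact dvd_zero _
  · intro H i
    induction i using Nat.strong_induction_on with
    | _ i IH =>
      intro hi hiN
      have hd : r + i - 1 = (i - (n - r) - 1) + n := by omega
      have hmem : ((0 : ℕ), i) ∈ Finset.HasAntidiagonal.antidiagonal i := by simp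
      have hsum : (r + i - 1).choose i = n.choose i +
          ∑ x ∈ (Finset.HasAntidiagonal.antidiagonal i).erase (0, i),
            (i - (n - r) - 1).choose x.1 * n.choose x.2 := by
        rw [hd, Nat.add_choose_eq, ← Finset.add_sum_erase _ _ hmem]
        simp
      have hS : 2 ^ (N - i + 1) ∣
          ∑ x ∈ (Finset.HasAntidiagonal.antidiagonal i).erase (0, i),
            (i - (n - r) - 1).choose x.1 * n.choose x.2 := by
        apply Finset.dvd_sum
        rintro ⟨a, b⟩ hab
        have hne := Finset.ne_of_mem_erase hab
        have hab' : a + b = i := Finset.HasAntidiagonal.mem_antidiagonal.mp (Finset.mem_of_mem_erase hab)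
        have ha : 1 ≤ a := by
          rcases Nat.eq_zero_or_pos a with h | h
          · subst h
            have hbi : b = i := by omega
            exact absurd (by rw [hbi]) hne
          · exact h
        by_cases hb : n - r < b
        · exact Dvd.dvd.mul_left
            ((pow_dvd_pow 2 (by omega)).trans (IH b (by omega) hb (by omega))) _
        · rw [Nat.choose_eq_zero_of_lt (by omega), zero_mul]
          exact dvd_zero _
      have hx : n.choose i = (r + i - 1).choose i -
          ∑ x ∈ (Finset.HasAntidiagonal.antidiagonal i).erase (0, i),
            (i - (n - r) - 1).choose x.1 * n.choose x.2 := by omega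
      rw [hx]
      exact Nat.dvd_sub (H i hi hiN) hS
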